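/- If ω^{(r+1)} ≡ 0 (i.e., ω is a vector polynomial of degree at most r), then for the disturbed LTI system ẋ = A x + B_u u(t-h) + B_ω ω with piecewise constant u, the prediction x̂(t+T) = e^{AT} x(t) + Γ_ω(T) ω_r(t) + Γ_u-terms computed from the exact current state x(t) and exact disturbance derivatives ω_r(t) equals x(t+T) exactly. -/

import Mathlib

open MeasureTheory Matrix

/-- The matrix series `Γ_{ω,i}(τ) = Σ_{j=0}^∞ ((i+1)!/(i+1+j)!) A^j τ^j`. -/
noncomputable def Gam {n : ℕ} (A : Matrix (Fin n) (Fin n) ℝ) (i : ℕ) (τ : ℝ) :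
    Matrix (Fin n) (Fin n) ℝ :=
  ∑' j : ℕ, (((i + 1).factorial : ℝ) / ((i + 1 + j).factorial) * τ ^ j) • A ^ j



section MyAux

open MeasureTheory Finset

/-- Taylor for polynomial-like functions: if the (r+1)-st derivative vanishes identically. -/
theorem taylor_poly {F : Type*} [NormedAddCommGroup F] [NormedSpace ℝ F] {r : ℕ} {ω : ℝ → F}
    (hω : ContDiff ℝ (r + 1) ω) (hpoly : ∀ s : ℝ, iteratedDeriv (r + 1) ω s = 0) (t s : ℝ) :
    ω s = ∑ i ∈ Finset.range (r + 1),
      ((s - t) ^ i / i.factorial : ℝ) • iteratedDeriv i ω t := by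
  set G : ℝ → F := fun σ => ∑ i ∈ Finset.range (r + 1),
    ((s - σ) ^ i / i.factorial : ℝ) • iteratedDeriv i ω σ with hG
  have hDG : ∀ σ : ℝ, HasDerivAt G 0 σ := by
    intro σ
    have hterm : ∀ i ∈ Finset.range (r + 1), HasDerivAt
        (fun σ => ((s - σ) ^ i / i.factorial : ℝ) • iteratedDeriv i ω σ)
        ((-(i : ℝ) * (s - σ) ^ (i - 1) / i.factorial) • iteratedDeriv i ω σ
          + ((s - σ) ^ i / i.factorial : ℝ) • iteratedDeriv (i + 1) ω σ) σ := by
      intro i hi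
      have hc : HasDerivAt (fun σ : ℝ => ((s - σ) ^ i / i.factorial : ℝ))
          (-(i : ℝ) * (s - σ) ^ (i - 1) / i.factorial) σ := by
        have h1 : HasDerivAt (fun σ : ℝ => s - σ) (-1) σ := by
          simpa using (hasDerivAt_id σ).const_sub s
        have := (h1.pow i).div_const (i.factorial : ℝ)
        refine this.congr_deriv ?_
        ring
      have hf : HasDerivAt (iteratedDeriv i ω) (iteratedDeriv (i + 1) ω σ) σ := by
        have hdiff : Differentiable ℝ (iteratedDeriv i ω) := by
          apply hω.differentiable_iteratedDeriv i
          exact_mod_cast Nat.lt_succ_of_le (Nat.lt_succ_iff.mp (Finset.mem_range.mp hi))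
        have := (hdiff σ).hasDerivAt
        rwa [← iteratedDeriv_succ] at this  -- deriv vs hasDerivAt
      simpa [add_comm] using hc.fun_smul hf
    have hsum := HasDerivAt.fun_sum hterm
    convert hsum using 1
    set d : ℕ → F := fun i => ((s - σ) ^ i / i.factorial : ℝ) • iteratedDeriv (i + 1) ω σ with hd
    have hsplit : ∀ i ∈ Finset.range (r + 1),
        ((-(i : ℝ) * (s - σ) ^ (i - 1) / i.factorial) • iteratedDeriv i ω σ
          + ((s - σ) ^ i / i.factorial : ℝ) • iteratedDeriv (i + 1) ω σ)
        = (if i = 0 then 0 else -d (i - 1)) + d i := by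
      intro i _
      rcases i with _ | i
      · simp [d]
      · simp only [if_neg (Nat.succ_ne_zero i), d, Nat.add_sub_cancel]
        congr 1
        rw [← neg_smul]
        congr 1
        rw [Nat.factorial_succ]
        push_cast
        field_simp
    rw [Finset.sum_congr rfl hsplit, Finset.sum_add_distrib]
    have h2 : ∑ i ∈ Finset.range (r + 1), (if i = 0 then (0 : F) else -d (i - 1))
        = -∑ i ∈ Finset.range r, d i := by
      rw [Finset.sum_range_succ']
      simp [← Finset.sum_neg_distrib]
    have h3 : ∑ i ∈ Finset.range (r + 1), d i = ∑ i ∈ Finset.range r, d i := by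
      rw [Finset.sum_range_succ]
      have : d r = 0 := by simp [d, hpoly σ]
      simp [this]
    rw [h2, h3]
    abel
  have hconst : G s = G t :=
    is_const_of_deriv_eq_zero (fun σ => (hDG σ).differentiableAt)
      (fun σ => (hDG σ).deriv) s t
  have hGs : G s = ω s := by
    show (∑ i ∈ Finset.range (r+1), ((s - s) ^ i / i.factorial : ℝ) • iteratedDeriv i ω s) = ω s
    rw [Finset.sum_eq_single 0]
    · simp
    · intro i _ hi
      rcases i with _ | i
      · exact absurd rfl hi
      · simp
    · simp
  rw [← hGs, hconst]


open intervalIntegral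

theorem beta_nat (c : ℝ) : ∀ (j i : ℕ), ∫ s in (0:ℝ)..c, s ^ i * (c - s) ^ j
    = (i.factorial * j.factorial / (i + j + 1).factorial : ℝ) * c ^ (i + j + 1) := by
  intro j
  induction j with
  | zero =>
    intro i
    simp only [pow_zero, mul_one, Nat.factorial_zero, Nat.cast_one, Nat.add_zero]
    rw [integral_pow, Nat.factorial_succ, zero_pow (Nat.succ_ne_zero i)]
    have : (i.factorial : ℝ) ≠ 0 := Nat.cast_ne_zero.mpr i.factorial_ne_zero
    field_simp
    push_cast
    ring
  | succ j ih =>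
    intro i
    have hu : ∀ x ∈ Set.uIcc (0:ℝ) c, HasDerivAt (fun s : ℝ => (c - s) ^ (j + 1))
        (-( (j+1:ℝ) * (c - x) ^ j)) x := by
      intro x _
      have h1 : HasDerivAt (fun s : ℝ => c - s) (-1) x := by
        simpa using (hasDerivAt_id x).const_sub c
      have := h1.pow (j+1)
      refine this.congr_deriv ?_
      push_cast [Nat.succ_sub_one]
      ring
    have hv : ∀ x ∈ Set.uIcc (0:ℝ) c, HasDerivAt (fun s : ℝ => s ^ (i+1) / (i+1 : ℝ))
        (x ^ i) x := by
      intro x _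
      have := (hasDerivAt_pow (i+1) x).div_const ((i+1 : ℝ))
      refine this.congr_deriv ?_
      push_cast
      field_simp
    have hint1 : IntervalIntegrable (fun x : ℝ => -((j+1:ℝ) * (c - x) ^ j)) MeasureTheory.volume 0 c := by
      apply Continuous.intervalIntegrable; continuity
    have hint2 : IntervalIntegrable (fun x : ℝ => x ^ i) MeasureTheory.volume 0 c := by
      apply Continuous.intervalIntegrable; continuity
    have H := integral_mul_deriv_eq_deriv_mul hu hv hint1 hint2
    simp only [sub_self, zero_pow (Nat.succ_ne_zero j), zero_mul, sub_zero, zero_pow,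
      ne_eq, Nat.succ_ne_zero, not_false_eq_true, mul_comm] at H
    -- H : ∫ s in 0..c, (c-s)^(j+1) * s^i = ... - ∫ ...
    have h4 : (fun x : ℝ => x ^ (i+1) / (i+1:ℝ) * -((c - x) ^ j * ((j:ℝ)+1))) = fun x : ℝ => (-((j:ℝ)+1)/((i:ℝ)+1)) * (x ^ (i+1) * (c - x) ^ j) := by
      ext x; ring
    rw [H, h4, intervalIntegral.integral_const_mul, ih (i+1)]
    have e1 : i + 1 + j + 1 = i + (j+1) + 1 := by omega
    rw [e1]
    have h5 : ((i + (j+1) + 1).factorial : ℝ) ≠ 0 := Nat.cast_ne_zero.mpr (Nat.factorial_ne_zero _)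
    simp only [Nat.factorial_succ]
    push_cast
    field_simp
    ring




section Aux

attribute [local instance] Matrix.linftyOpNormedAddCommGroup Matrix.linftyOpNormedSpace
  Matrix.linftyOpNormedRing Matrix.linftyOpNormedAlgebra

/-- `mulVec` by a fixed vector, as a continuous linear map on matrices. -/
noncomputable def mulVecCLM {a b : ℕ} (v : Fin b → ℝ) :
    Matrix (Fin a) (Fin b) ℝ →L[ℝ] (Fin a → ℝ) :=
  LinearMap.toContinuousLinearMap
    { toFun := fun M => M.mulVec v
      map_add' := fun M N => Matrix.add_mulVec M N v
      map_smul' := fun c M => Matrix.smul_mulVec c M v }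

@[simp] lemma mulVecCLM_apply {a b : ℕ} (v : Fin b → ℝ) (M : Matrix (Fin a) (Fin b) ℝ) :
    mulVecCLM v M = M.mulVec v := rfl

lemma exp_mulVec {n : ℕ} (A : Matrix (Fin n) (Fin n) ℝ) (c : ℝ) (v : Fin n → ℝ) :
    (NormedSpace.exp (c • A)).mulVec v
      = ∑' j : ℕ, ((c ^ j / j.factorial : ℝ)) • (A ^ j).mulVec v := by
  rw [NormedSpace.exp_eq_tsum ℝ]
  have hsum : Summable (fun j : ℕ => ((j.factorial : ℝ)⁻¹) • (c • A) ^ j) :=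
    NormedSpace.expSeries_summable' (c • A)
  have h1 := (mulVecCLM (a := n) (b := n) v).map_tsum hsum
  simp only [mulVecCLM_apply] at h1
  rw [h1]
  congr 1
  ext j
  rw [smul_pow, Matrix.smul_mulVec, Matrix.smul_mulVec, smul_smul]
  congr 1
  field_simp

lemma coef_le (i j : ℕ) :
    (((i + 1).factorial : ℝ)) / ((i + 1 + j).factorial) ≤ 1 / j.factorial := by
  rw [div_le_div_iff₀ (by positivity) (by positivity)]
  rw [one_mul]
  exact_mod_cast Nat.le_of_dvd (i + 1 + j).factorial_pos
    (Nat.factorial_mul_factorial_dvd_factorial_add (i + 1) j)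

lemma Gam_summable {n : ℕ} (A : Matrix (Fin n) (Fin n) ℝ) (i : ℕ) (T : ℝ) :
    Summable (fun j : ℕ =>
      (((i + 1).factorial : ℝ) / ((i + 1 + j).factorial) * T ^ j) • A ^ j) := by
  have hone : ‖(1 : Matrix (Fin n) (Fin n) ℝ)‖ ≤ 1 := by
    rw [show (1 : Matrix (Fin n) (Fin n) ℝ) = Matrix.diagonal (fun _ => 1) from
      Matrix.diagonal_one.symm, Matrix.linfty_opNorm_diagonal]
    exact (pi_norm_le_iff_of_nonneg zero_le_one).mpr fun i => by simp
  have hb : Summable (fun j : ℕ => (|T| * ‖A‖) ^ j / (j.factorial : ℝ)) :=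
    Real.summable_pow_div_factorial _
  apply Summable.of_norm_bounded hb
  intro j
  have h2 : ‖(((i + 1).factorial : ℝ) / ((i + 1 + j).factorial) * T ^ j) • A ^ j‖
      = ((i + 1).factorial : ℝ) / ((i + 1 + j).factorial) * |T| ^ j * ‖A ^ j‖ := by
    rw [norm_smul, Real.norm_eq_abs, abs_mul, abs_div, abs_pow, Nat.abs_cast, Nat.abs_cast,
      mul_assoc]
  rw [h2]
  match j with
  | 0 =>
    simp only [pow_zero, Nat.add_zero, pow_zero, mul_one, Nat.factorial_zero, Nat.cast_one,
      div_one]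
    rw [div_self (by positivity), one_mul]
    exact hone
  | (j+1) =>
    calc ((i + 1).factorial : ℝ) / ((i + 1 + (j+1)).factorial) * |T| ^ (j+1) * ‖A ^ (j+1)‖
        ≤ (1 / (j+1).factorial) * |T| ^ (j+1) * ‖A‖ ^ (j+1) := by
          have hc := coef_le i (j+1)
          have hp := norm_pow_le' A (Nat.succ_pos j)
          gcongr
      _ = (|T| * ‖A‖) ^ (j+1) / (j+1).factorial := by
          rw [mul_pow]; ring

lemma Gam_mulVec {n : ℕ} (A : Matrix (Fin n) (Fin n) ℝ) (i : ℕ) (T : ℝ) (v : Fin n → ℝ) :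
    (Gam A i T).mulVec v
      = ∑' j : ℕ, (((i + 1).factorial : ℝ) / ((i + 1 + j).factorial) * T ^ j)
          • (A ^ j).mulVec v := by
  have h1 := (mulVecCLM (a := n) (b := n) v).map_tsum (Gam_summable A i T)
  simp only [mulVecCLM_apply] at h1
  rw [Gam, h1]
  congr 1
  ext j
  rw [Matrix.smul_mulVec]

end Aux

section Aux2

attribute [local instance] Matrix.linftyOpNormedAddCommGroup Matrix.linftyOpNormedSpace
  Matrix.linftyOpNormedRing Matrix.linftyOpNormedAlgebra

theorem beta_nat' (c : ℝ) (j i : ℕ) : ∫ s in (0:ℝ)..c, s ^ i * (c - s) ^ j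
    = (i.factorial * j.factorial / (i + j + 1).factorial : ℝ) * c ^ (i + j + 1) :=
  beta_nat c j i

theorem key {n : ℕ} (A : Matrix (Fin n) (Fin n) ℝ) (t T : ℝ) (hT : 0 ≤ T) (i : ℕ)
    (v : Fin n → ℝ) :
    (∫ s in t..t+T, ((s - t) ^ i / i.factorial : ℝ)
        • (NormedSpace.exp ((t + T - s) • A)).mulVec v)
      = (T ^ (i+1) / (i+1).factorial : ℝ) • (Gam A i T).mulVec v := by
  have htt : t ≤ t + T := le_add_of_nonneg_right hT
  set μ := volume.restrict (Set.Ioc t (t+T)) with hμ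
  set G : ℕ → ℝ → (Fin n → ℝ) := fun j s =>
    (((s - t) ^ i * (t + T - s) ^ j) / (i.factorial * j.factorial) : ℝ) • (A ^ j).mulVec v
    with hGdef
  have hsummable : ∀ c : ℝ, Summable fun j : ℕ => ((c ^ j / j.factorial : ℝ)) • (A ^ j).mulVec v := by
    intro c
    have h1 := (NormedSpace.expSeries_summable' (𝕂 := ℝ) (c • A)).mapL (mulVecCLM v)
    convert h1 using 2 with j
    rw [mulVecCLM_apply, smul_pow, Matrix.smul_mulVec, Matrix.smul_mulVec, smul_smul]
    congr 1
    exact div_eq_inv_mul _ _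
  have hpt : ∀ s : ℝ, ((s - t) ^ i / i.factorial : ℝ)
      • (NormedSpace.exp ((t + T - s) • A)).mulVec v = ∑' j : ℕ, G j s := by
    intro s
    rw [exp_mulVec, ← Summable.tsum_const_smul _ (hsummable (t + T - s))]
    apply tsum_congr
    intro j
    rw [smul_smul, hGdef]
    congr 1
    ring
  have hGcont : ∀ j, Continuous (G j) := by
    intro j
    apply Continuous.fun_smul _ continuous_const
    fun_prop
  have hGint : ∀ j, Integrable (G j) μ := fun j => (hGcont j).integrableOn_Ioc
  have hC : ∀ j : ℕ, ‖((j.factorial : ℝ)⁻¹) • (T • A) ^ j‖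
      = T ^ j / j.factorial * ‖A ^ j‖ := by
    intro j
    rw [smul_pow, norm_smul, norm_smul, Real.norm_eq_abs, Real.norm_eq_abs, abs_pow,
      abs_of_nonneg hT, abs_of_nonneg (by positivity : (0:ℝ) ≤ ((j.factorial : ℝ))⁻¹)]
    ring
  have hnorm : ∀ j : ℕ, ∀ s ∈ Set.Ioc t (t + T), ‖G j s‖
      ≤ T ^ i / i.factorial * (‖((j.factorial : ℝ)⁻¹) • (T • A) ^ j‖ * ‖v‖) := by
    intro j s hs
    obtain ⟨hs1, hs2⟩ := hs
    have h1 : |s - t| ≤ T := by rw [abs_of_nonneg (by linarith)]; linarith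
    have h2 : |t + T - s| ≤ T := by rw [abs_of_nonneg (by linarith)]; linarith
    rw [hGdef, hC, norm_smul, Real.norm_eq_abs, abs_div, abs_mul, abs_pow, abs_pow,
      abs_of_nonneg (by positivity : (0:ℝ) ≤ (i.factorial : ℝ) * j.factorial)]
    have h3 : ‖(A ^ j).mulVec v‖ ≤ ‖A ^ j‖ * ‖v‖ := Matrix.linfty_opNorm_mulVec _ _
    calc |s - t| ^ i * |t + T - s| ^ j / ((i.factorial : ℝ) * j.factorial) * ‖(A ^ j).mulVec v‖
        ≤ T ^ i * T ^ j / ((i.factorial : ℝ) * j.factorial) * (‖A ^ j‖ * ‖v‖) := by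
          gcongr <;> first | exact abs_nonneg _ | assumption
      _ = T ^ i / i.factorial * (T ^ j / j.factorial * ‖A ^ j‖ * ‖v‖) := by ring
  have hTvol : (μ Set.univ).toReal = T := by
    rw [hμ, Measure.restrict_apply_univ, Real.volume_Ioc]
    simp [hT]
  have hsum2 : Summable (fun j : ℕ => ∫ s, ‖G j s‖ ∂μ) := by
    have hB : Summable (fun j : ℕ => T * (T ^ i / i.factorial *
        (‖((j.factorial : ℝ)⁻¹) • (T • A) ^ j‖ * ‖v‖))) := by
      exact (((NormedSpace.norm_expSeries_summable' (𝕂 := ℝ) (T • A)).mul_right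
        ‖v‖).mul_left _).mul_left T
    apply Summable.of_nonneg_of_le (fun j => integral_nonneg fun s => norm_nonneg _) _ hB
    intro j
    calc (∫ s, ‖G j s‖ ∂μ)
        ≤ ∫ _, (T ^ i / i.factorial *
            (‖((j.factorial : ℝ)⁻¹) • (T • A) ^ j‖ * ‖v‖)) ∂μ := by
          apply integral_mono_of_nonneg (ae_of_all _ fun s => norm_nonneg _)
            (integrable_const _)
          exact (ae_restrict_iff' measurableSet_Ioc).mpr (ae_of_all _ (hnorm j))
      _ = T * (T ^ i / i.factorial * (‖((j.factorial : ℝ)⁻¹) • (T • A) ^ j‖ * ‖v‖)) := by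
          rw [MeasureTheory.integral_const, measureReal_def, hTvol, smul_eq_mul]
  have hswap := MeasureTheory.integral_tsum_of_summable_integral_norm hGint hsum2
  have hpiece : ∀ j : ℕ, (∫ s, G j s ∂μ)
      = (T ^ (i + j + 1) / (i + j + 1).factorial : ℝ) • (A ^ j).mulVec v := by
    intro j
    rw [hμ, ← intervalIntegral.integral_of_le htt, hGdef]
    rw [intervalIntegral.integral_smul_const]
    congr 1
    have hre : (fun s : ℝ => ((s - t) ^ i * (t + T - s) ^ j) / ((i.factorial : ℝ) * j.factorial))
        = fun s : ℝ => (1 / ((i.factorial : ℝ) * j.factorial)) *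
            ((fun σ : ℝ => σ ^ i * (T - σ) ^ j) (s - t)) := by
      ext s
      have : t + T - s = T - (s - t) := by ring
      rw [this]
      ring
    rw [hre, intervalIntegral.integral_const_mul, intervalIntegral.integral_comp_sub_right
      (fun σ : ℝ => σ ^ i * (T - σ) ^ j) t, sub_self, add_sub_cancel_left, beta_nat' T j i]
    have hi : (i.factorial : ℝ) ≠ 0 := Nat.cast_ne_zero.mpr i.factorial_ne_zero
    have hj : (j.factorial : ℝ) ≠ 0 := Nat.cast_ne_zero.mpr j.factorial_ne_zero
    field_simp
  calc (∫ s in t..t+T, ((s - t) ^ i / i.factorial : ℝ)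
        • (NormedSpace.exp ((t + T - s) • A)).mulVec v)
      = ∫ s, (∑' j : ℕ, G j s) ∂μ := by
        rw [intervalIntegral.integral_of_le htt, ← hμ]
        exact integral_congr_ae (ae_of_all _ fun s => hpt s)
    _ = ∑' j : ℕ, ∫ s, G j s ∂μ := hswap.symm
    _ = ∑' j : ℕ, (T ^ (i + j + 1) / (i + j + 1).factorial : ℝ) • (A ^ j).mulVec v :=
        tsum_congr hpiece
    _ = (T ^ (i+1) / (i+1).factorial : ℝ) • (Gam A i T).mulVec v := by
        rw [Gam_mulVec]
        have hs3 : Summable fun j : ℕ =>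
            (((i + 1).factorial : ℝ) / ((i + 1 + j).factorial) * T ^ j) • (A ^ j).mulVec v := by
          have h4 := (Gam_summable A i T).mapL (mulVecCLM v)
          simpa [mulVecCLM_apply, Matrix.smul_mulVec] using h4
        rw [← Summable.tsum_const_smul _ hs3]
        apply tsum_congr
        intro j
        rw [smul_smul]
        congr 1
        rw [show i + 1 + j = i + j + 1 from by omega]
        have h5 : ((i + j + 1).factorial : ℝ) ≠ 0 := Nat.cast_ne_zero.mpr (Nat.factorial_ne_zero _)
        have h6 : ((i + 1).factorial : ℝ) ≠ 0 := Nat.cast_ne_zero.mpr (Nat.factorial_ne_zero _)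
        field_simp
        ring

end Aux2



section Aux3

attribute [local instance] Matrix.linftyOpNormedAddCommGroup Matrix.linftyOpNormedSpace
  Matrix.linftyOpNormedRing Matrix.linftyOpNormedAlgebra

/-- `mulVec` as a continuous bilinear map. -/
noncomputable def mulVecL {a b : ℕ} :
    Matrix (Fin a) (Fin b) ℝ →L[ℝ] (Fin b → ℝ) →L[ℝ] (Fin a → ℝ) :=
  LinearMap.toContinuousLinearMap
    { toFun := fun M => LinearMap.toContinuousLinearMap (Matrix.mulVecLin M)
      map_add' := by
        intro M N
        apply ContinuousLinearMap.ext
        intro v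
        show (M + N).mulVec v = M.mulVec v + N.mulVec v
        rw [Matrix.add_mulVec]
      map_smul' := by
        intro c M
        apply ContinuousLinearMap.ext
        intro v
        show (c • M).mulVec v = c • M.mulVec v
        rw [Matrix.smul_mulVec] }

@[simp] lemma mulVecL_apply {a b : ℕ} (M : Matrix (Fin a) (Fin b) ℝ) (v : Fin b → ℝ) :
    mulVecL M v = M.mulVec v := rfl

lemma ae_eq_Ioc_of_Ico {E' : Type*} [NormedAddCommGroup E'] {a b : ℝ} {F G : ℝ → E'}
    (heq : ∀ s ∈ Set.Ico a b, F s = G s) :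
    F =ᵐ[volume.restrict (Set.Ioc a b)] G := by
  rw [Filter.EventuallyEq, ae_restrict_iff' measurableSet_Ioc]
  rw [MeasureTheory.ae_iff]
  refine measure_mono_null ?_ (Real.volume_singleton (a := b))
  intro s hs
  simp only [Set.mem_setOf_eq, not_forall] at hs
  obtain ⟨⟨h1, h2⟩, h3⟩ := hs
  simp only [Set.mem_singleton_iff]
  by_contra hsb
  exact h3 (heq s ⟨le_of_lt h1, lt_of_le_of_ne h2 hsb⟩)

/-- Variation of constants formula. -/
theorem voc {n : ℕ} (A : Matrix (Fin n) (Fin n) ℝ) (x f : ℝ → Fin n → ℝ)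
    (hx : ∀ s : ℝ, HasDerivAt x (A.mulVec (x s) + f s) s) (t T : ℝ)
    (hint : IntervalIntegrable
      (fun s => (NormedSpace.exp ((t + T - s) • A)).mulVec (f s)) volume t (t + T)) :
    x (t + T) = (NormedSpace.exp (T • A)).mulVec (x t)
      + ∫ s in t..t+T, (NormedSpace.exp ((t + T - s) • A)).mulVec (f s) := by
  set E : ℝ → Matrix (Fin n) (Fin n) ℝ := fun σ => NormedSpace.exp (σ • A) with hE
  have hEc : ∀ s : ℝ, HasDerivAt (fun s => E (t + T - s)) (-(E (t + T - s) * A)) s := by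
    intro s
    have h1 : HasDerivAt (fun s : ℝ => t + T - s) (-1) s := (hasDerivAt_id s).const_sub (t + T)
    have h2 : HasDerivAt E (E (t + T - s) * A) (t + T - s) :=
      hasDerivAt_exp_smul_const A (t + T - s)
    have := h2.scomp s h1
    simp at this; exact this
  have hg : ∀ s : ℝ, HasDerivAt (fun s => mulVecL (E (t + T - s)) (x s))
      ((E (t + T - s)).mulVec (f s)) s := by
    intro s
    have hc : HasDerivAt (fun s => mulVecL (E (t + T - s)))
        (mulVecL (-(E (t + T - s) * A))) s :=
      (mulVecL.hasFDerivAt).comp_hasDerivAt s (hEc s)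
    have h2 := hc.clm_apply (hx s)
    refine h2.congr_deriv ?_
    simp only [mulVecL_apply, map_neg, ContinuousLinearMap.neg_apply]
    rw [← Matrix.mulVec_mulVec, Matrix.mulVec_add]
    abel
  have hFTC := intervalIntegral.integral_eq_sub_of_hasDerivAt
    (f := fun s => mulVecL (E (t + T - s)) (x s))
    (fun s _ => hg s) hint
  rw [hFTC]
  simp only [mulVecL_apply, hE, add_sub_cancel_left, sub_self, zero_smul,
    NormedSpace.exp_zero, Matrix.one_mulVec]
  abel

end Aux3

end MyAux

section MyMain

attribute [local instance] Matrix.linftyOpNormedAddCommGroup Matrix.linftyOpNormedSpace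
  Matrix.linftyOpNormedRing Matrix.linftyOpNormedAlgebra

lemma ae_imp_of_Ico {E' : Type*} [NormedAddCommGroup E'] {a b : ℝ} (hab : a ≤ b) {F G : ℝ → E'}
    (heq : ∀ s ∈ Set.Ico a b, F s = G s) :
    ∀ᵐ s ∂(volume : Measure ℝ), s ∈ Set.uIoc a b → F s = G s := by
  rw [Set.uIoc_of_le hab, MeasureTheory.ae_iff]
  refine measure_mono_null ?_ (Real.volume_singleton (a := b))
  intro s hs
  simp only [Set.mem_setOf_eq, not_forall] at hs
  obtain ⟨⟨h1, h2⟩, h3⟩ := hs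
  simp only [Set.mem_singleton_iff]
  by_contra hsb
  exact h3 (heq s ⟨le_of_lt h1, lt_of_le_of_ne h2 hsb⟩)

theorem stmt14_aux {n m q r N : ℕ} (A : Matrix (Fin n) (Fin n) ℝ)
    (Bu : Matrix (Fin n) (Fin m) ℝ) (Bω : Matrix (Fin n) (Fin q) ℝ)
    (x : ℝ → Fin n → ℝ) (u : ℝ → Fin m → ℝ) (ω : ℝ → Fin q → ℝ)
    (hω : ContDiff ℝ (r + 1) ω) (h t T : ℝ) (hh : 0 ≤ h) (hT : 0 ≤ T)
    (hx : ∀ s : ℝ,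
      HasDerivAt x (A.mulVec (x s) + Bu.mulVec (u (s - h)) + Bω.mulVec (ω s)) s)
    (τ : Fin (N + 2) → ℝ) (hτ0 : τ 0 = t - h) (hτN : τ (Fin.last (N + 1)) = t + T - h)
    (hτmono : StrictMono τ)
    (uv : Fin (N + 1) → Fin m → ℝ)
    (hu : ∀ k : Fin (N + 1), ∀ φ : ℝ, τ k.castSucc ≤ φ → φ < τ k.succ → u φ = uv k)
    (huend : u (t + T - h) = uv (Fin.last N))
    (hpoly : ∀ s : ℝ, iteratedDeriv (r + 1) ω s = 0) :
    x (t + T) =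
      (NormedSpace.exp (T • A)).mulVec (x t)
        + (∑ k : Fin (N + 1),
            ∫ s in (τ k.castSucc + h)..(τ k.succ + h),
              (NormedSpace.exp ((t + T - s) • A) * Bu).mulVec (uv k))
        + (∑ i ∈ Finset.range (r + 1),
            (T ^ (i + 1) / (i + 1).factorial : ℝ) •
              (Gam A i T * Bω).mulVec (iteratedDeriv i ω t)) := by
  classical
  set E : ℝ → Matrix (Fin n) (Fin n) ℝ := fun σ => NormedSpace.exp (σ • A) with hEdef
  have hEcont : Continuous E := by
    exact NormedSpace.exp_continuous.comp (continuous_id.smul continuous_const)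
  have hEcont' : Continuous fun s : ℝ => E (t + T - s) :=
    hEcont.comp (continuous_const.sub continuous_id)
  -- subdivision points
  set a : ℕ → ℝ := fun i => τ ⟨min i (N + 1), by omega⟩ + h with ha
  have ha0 : a 0 = t := by
    have : (⟨min 0 (N + 1), by omega⟩ : Fin (N + 2)) = 0 := by ext; simp
    rw [ha]; simp only [this, hτ0]; ring
  have haN : a (N + 1) = t + T := by
    have : (⟨min (N + 1) (N + 1), by omega⟩ : Fin (N + 2)) = Fin.last (N + 1) := by
      ext; simp [Fin.last]
    rw [ha]; simp only [this, hτN]; ring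
  have hacast : ∀ k : Fin (N + 1),
      a k.val = τ k.castSucc + h ∧ a (k.val + 1) = τ k.succ + h := by
    intro k
    have hk := k.isLt
    have h1 : (⟨min k.val (N + 1), by omega⟩ : Fin (N + 2)) = k.castSucc := by
      apply Fin.ext
      simp only [Fin.coe_castSucc]
      omega
    have h2 : (⟨min (k.val + 1) (N + 1), by omega⟩ : Fin (N + 2)) = k.succ := by
      apply Fin.ext
      simp only [Fin.val_succ]
      omega
    exact ⟨by simp only [ha]; rw [h1], by simp only [ha]; rw [h2]⟩
  -- the two forcing-term integrands
  set Fu : ℝ → Fin n → ℝ := fun s => (E (t + T - s)).mulVec (Bu.mulVec (u (s - h))) with hFu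
  set Fω : ℝ → Fin n → ℝ := fun s => (E (t + T - s)).mulVec (Bω.mulVec (ω s)) with hFω
  set Fk : Fin (N + 1) → ℝ → Fin n → ℝ :=
    fun k s => (E (t + T - s) * Bu).mulVec (uv k) with hFk
  have hFk_eq : ∀ k : Fin (N + 1), ∀ s ∈ Set.Ico (τ k.castSucc + h) (τ k.succ + h),
      Fu s = Fk k s := by
    intro k s hs
    simp only [hFu, hFk]
    rw [hu k (s - h) (by linarith [hs.1]) (by linarith [hs.2]), Matrix.mulVec_mulVec]
  have hab : ∀ k : Fin (N + 1), τ k.castSucc + h ≤ τ k.succ + h := by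
    intro k
    have := hτmono (Fin.castSucc_lt_succ (i := k))
    linarith
  have hFkcont : ∀ k, Continuous (Fk k) := by
    intro k
    exact Continuous.matrix_mulVec (hEcont'.matrix_mul continuous_const) continuous_const
  have hFωcont : Continuous Fω := by
    apply Continuous.matrix_mulVec hEcont'
    exact Continuous.matrix_mulVec continuous_const hω.continuous
  have hFuInt_piece : ∀ k : Fin (N + 1),
      IntervalIntegrable Fu volume (τ k.castSucc + h) (τ k.succ + h) := by
    intro k
    apply ((hFkcont k).intervalIntegrable _ _).congr_ae
    apply Filter.EventuallyEq.symm
    exact (ae_restrict_iff' measurableSet_uIoc).mpr (ae_imp_of_Ico (hab k) (hFk_eq k))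
  have hInt_nat : ∀ i, i < N + 1 → IntervalIntegrable Fu volume (a i) (a (i + 1)) := by
    intro i hi
    have := hFuInt_piece ⟨i, hi⟩
    rwa [← (hacast ⟨i, hi⟩).1, ← (hacast ⟨i, hi⟩).2] at this
  have hFuInt : IntervalIntegrable Fu volume t (t + T) := by
    have := IntervalIntegrable.trans_iterate hInt_nat
    rwa [ha0, haN] at this
  have hFωInt : IntervalIntegrable Fω volume t (t + T) := hFωcont.intervalIntegrable _ _
  have hx' : ∀ s : ℝ, HasDerivAt x (A.mulVec (x s)
      + (Bu.mulVec (u (s - h)) + Bω.mulVec (ω s))) s := by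
    intro s; have := hx s; rwa [add_assoc] at this
  have hint : IntervalIntegrable
      (fun s => (NormedSpace.exp ((t + T - s) • A)).mulVec
        (Bu.mulVec (u (s - h)) + Bω.mulVec (ω s))) volume t (t + T) := by
    have heq : (fun s => (NormedSpace.exp ((t + T - s) • A)).mulVec
        (Bu.mulVec (u (s - h)) + Bω.mulVec (ω s))) = fun s => Fu s + Fω s := by
      funext s
      simp only [hFu, hFω, hEdef, Matrix.mulVec_add]
    rw [heq]
    exact hFuInt.add hFωInt
  have hvoc := voc A x _ hx' t T hint
  have hsplitint : (∫ s in t..t+T, (NormedSpace.exp ((t + T - s) • A)).mulVec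
      (Bu.mulVec (u (s - h)) + Bω.mulVec (ω s)))
      = (∫ s in t..t+T, Fu s) + ∫ s in t..t+T, Fω s := by
    rw [← intervalIntegral.integral_add hFuInt hFωInt]
    apply intervalIntegral.integral_congr
    intro s _
    simp only [hFu, hFω, hEdef, Matrix.mulVec_add]
  have hupart : (∫ s in t..t+T, Fu s) = ∑ k : Fin (N + 1),
      ∫ s in (τ k.castSucc + h)..(τ k.succ + h),
        (NormedSpace.exp ((t + T - s) • A) * Bu).mulVec (uv k) := by
    have hchain := (intervalIntegral.sum_integral_adjacent_intervals hInt_nat).symm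
    have h00 : (∫ s in t..t+T, Fu s) = ∫ s in (a 0)..(a (N+1)), Fu s := by rw [ha0, haN]
    rw [h00, hchain]
    rw [← Fin.sum_univ_eq_sum_range (fun i => ∫ s in a i..a (i + 1), Fu s) (N + 1)]
    apply Finset.sum_congr rfl
    intro k _
    rw [(hacast k).1, (hacast k).2]
    apply intervalIntegral.integral_congr_ae
    exact ae_imp_of_Ico (hab k) (hFk_eq k)
  have hTaylor := taylor_poly hω hpoly t
  have hωpart : (∫ s in t..t+T, Fω s) = ∑ i ∈ Finset.range (r + 1),
      (T ^ (i + 1) / (i + 1).factorial : ℝ) •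
        (Gam A i T * Bω).mulVec (iteratedDeriv i ω t) := by
    have hstep : ∀ s : ℝ, Fω s = ∑ i ∈ Finset.range (r + 1),
        ((s - t) ^ i / i.factorial : ℝ) •
          (NormedSpace.exp ((t + T - s) • A)).mulVec (Bω.mulVec (iteratedDeriv i ω t)) := by
      intro s
      simp only [hFω, hEdef]
      rw [hTaylor s]
      rw [show Bω.mulVec (∑ i ∈ Finset.range (r + 1),
            ((s - t) ^ i / i.factorial : ℝ) • iteratedDeriv i ω t)
          = ∑ i ∈ Finset.range (r + 1),
            ((s - t) ^ i / i.factorial : ℝ) • Bω.mulVec (iteratedDeriv i ω t) from by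
        simp only [← Matrix.mulVecLin_apply, _root_.map_sum, _root_.map_smul]]
      rw [show (NormedSpace.exp ((t + T - s) • A)).mulVec (∑ i ∈ Finset.range (r + 1),
            ((s - t) ^ i / i.factorial : ℝ) • Bω.mulVec (iteratedDeriv i ω t))
          = ∑ i ∈ Finset.range (r + 1), ((s - t) ^ i / i.factorial : ℝ) •
            (NormedSpace.exp ((t + T - s) • A)).mulVec (Bω.mulVec (iteratedDeriv i ω t)) from by
        simp only [← Matrix.mulVecLin_apply, _root_.map_sum, _root_.map_smul]]
    rw [intervalIntegral.integral_congr (fun s _ => hstep s)]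
    rw [intervalIntegral.integral_finset_sum]
    · apply Finset.sum_congr rfl
      intro i _
      rw [key A t T hT i (Bω.mulVec (iteratedDeriv i ω t)), Matrix.mulVec_mulVec]
    · intro i _
      apply Continuous.intervalIntegrable
      apply Continuous.fun_smul (by fun_prop)
      exact Continuous.matrix_mulVec hEcont' continuous_const
  rw [hvoc, hsplitint, hupart, hωpart, add_assoc]

end MyMain

/-- Exact prediction for polynomial disturbances of degree ≤ r (`ω^{(r+1)} ≡ 0`): both error
terms vanish, so the predictor computed from the exact state and disturbance derivatives is
exact. The jumping instants of the
piecewise-constant delayed input are `τ 1 < … < τ N` (with `τ 0 = t - h`, `τ (N+1) = t + T - h`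
as artificial endpoints), and the value on the `k`-th subinterval is `uv k`. -/
theorem stmt14 {n m q r N : ℕ} (A : Matrix (Fin n) (Fin n) ℝ)
    (Bu : Matrix (Fin n) (Fin m) ℝ) (Bω : Matrix (Fin n) (Fin q) ℝ)
    (x : ℝ → Fin n → ℝ) (u : ℝ → Fin m → ℝ) (ω : ℝ → Fin q → ℝ)
    (hω : ContDiff ℝ (r + 1) ω) (h t T : ℝ) (hh : 0 ≤ h) (hT : 0 ≤ T)
    (hx : ∀ s : ℝ,
      HasDerivAt x (A.mulVec (x s) + Bu.mulVec (u (s - h)) + Bω.mulVec (ω s)) s)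
    (τ : Fin (N + 2) → ℝ) (hτ0 : τ 0 = t - h) (hτN : τ (Fin.last (N + 1)) = t + T - h)
    (hτmono : StrictMono τ)
    (uv : Fin (N + 1) → Fin m → ℝ)
    (hu : ∀ k : Fin (N + 1), ∀ φ : ℝ, τ k.castSucc ≤ φ → φ < τ k.succ → u φ = uv k)
    (huend : u (t + T - h) = uv (Fin.last N))
    (hpoly : ∀ s : ℝ, iteratedDeriv (r + 1) ω s = 0) :
    x (t + T) =
      (NormedSpace.exp (T • A)).mulVec (x t)
        + (∑ k : Fin (N + 1),
            ∫ s in (τ k.castSucc + h)..(τ k.succ + h),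
              (NormedSpace.exp ((t + T - s) • A) * Bu).mulVec (uv k))
        + (∑ i ∈ Finset.range (r + 1),
            (T ^ (i + 1) / (i + 1).factorial : ℝ) •
              (Gam A i T * Bω).mulVec (iteratedDeriv i ω t)) :=
  stmt14_aux A Bu Bω x u ω hω h t T hh hT hx τ hτ0 hτN hτmono uv hu huend hpoly
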